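/- Let |φ⟩ be a unit vector satisfying L_k|φ⟩ = λ_k|φ⟩ for all k and (iH + Σ_k L_k†L_k)|φ⟩ = μ|φ⟩ with Re(μ) = Σ_k |λ_k|². Then ρ = |φ⟩⟨φ| is a stationary state: L(ρ) = 0. -/

import Mathlib

open Matrix

/-- The Lindbladian `L(ρ) = -i[H,ρ] + Σ_k (2 L_k ρ L_kᴴ - L_kᴴL_k ρ - ρ L_kᴴL_k)`. -/
noncomputable def lindbladian {N K : ℕ} (H : Matrix (Fin N) (Fin N) ℂ)
    (L : Fin K → Matrix (Fin N) (Fin N) ℂ) (ρ : Matrix (Fin N) (Fin N) ℂ) :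
    Matrix (Fin N) (Fin N) ℂ :=
  (-Complex.I) • (H * ρ - ρ * H)
    + ∑ k, ((2 : ℂ) • (L k * ρ * (L k)ᴴ) - ((L k)ᴴ * L k * ρ + ρ * ((L k)ᴴ * L k)))

section helpers
variable {N : ℕ}

lemma mul_vmv (M : Matrix (Fin N) (Fin N) ℂ) (u v : Fin N → ℂ) :
    M * vecMulVec u v = vecMulVec (M *ᵥ u) v := by
  ext i j
  simp [Matrix.mul_apply, vecMulVec_apply, mulVec, dotProduct, Finset.sum_mul, mul_assoc]

lemma vmv_mul (M : Matrix (Fin N) (Fin N) ℂ) (u v : Fin N → ℂ) :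
    vecMulVec u v * M = vecMulVec u (v ᵥ* M) := by
  ext i j
  simp only [Matrix.mul_apply, vecMulVec_apply, vecMul, dotProduct, Finset.mul_sum]
  congr 1; ext k; ring

lemma vmv_smul_left (a : ℂ) (u v : Fin N → ℂ) :
    vecMulVec (a • u) v = a • vecMulVec u v := by
  ext i j; simp [vecMulVec_apply, mul_assoc]

lemma vmv_smul_right (a : ℂ) (u v : Fin N → ℂ) :
    vecMulVec u (a • v) = a • vecMulVec u v := by
  ext i j; simp [vecMulVec_apply]; ring

lemma vmv_sub_left (u w v : Fin N → ℂ) :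
    vecMulVec (u - w) v = vecMulVec u v - vecMulVec w v := by
  ext i j; simp [vecMulVec_apply, sub_mul]

lemma vmv_add_right (u v w : Fin N → ℂ) :
    vecMulVec u (v + w) = vecMulVec u v + vecMulVec u w := by
  ext i j; simp [vecMulVec_apply, mul_add]

lemma vmv_sum_left {K : ℕ} (u : Fin K → Fin N → ℂ) (v : Fin N → ℂ) :
    vecMulVec (∑ k, u k) v = ∑ k, vecMulVec (u k) v := by
  ext i j; simp [vecMulVec_apply, Finset.sum_mul, Matrix.sum_apply, Finset.sum_apply]

lemma vmv_sum_right {K : ℕ} (u : Fin N → ℂ) (v : Fin K → Fin N → ℂ) :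
    vecMulVec u (∑ k, v k) = ∑ k, vecMulVec u (v k) := by
  ext i j; simp [vecMulVec_apply, Finset.mul_sum, Matrix.sum_apply, Finset.sum_apply]

lemma sum_mulVec' {K : ℕ} (A : Fin K → Matrix (Fin N) (Fin N) ℂ) (u : Fin N → ℂ) :
    (∑ k, A k) *ᵥ u = ∑ k, (A k) *ᵥ u := by
  ext j
  simp [mulVec, dotProduct, Matrix.sum_apply, Finset.sum_mul, Finset.sum_apply]
  rw [Finset.sum_comm]

end helpers

theorem pure_stationary_state_criterion {N K : ℕ}
    (H : Matrix (Fin N) (Fin N) ℂ) (L : Fin K → Matrix (Fin N) (Fin N) ℂ)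
    (φ : Fin N → ℂ) (lam : Fin K → ℂ) (μ : ℂ)
    (hH : H.IsHermitian)
    (hφ : dotProduct (star φ) φ = 1)
    (hL : ∀ k, (L k).mulVec φ = lam k • φ)
    (hEff : (Complex.I • H + ∑ k, (L k)ᴴ * L k).mulVec φ = μ • φ)
    (hRe : μ.re = ∑ k, Complex.normSq (lam k)) :
    lindbladian H L (vecMulVec φ (star φ)) = 0 := by
  classical
  set ρ := vecMulVec φ (star φ) with hρ
  set v := H *ᵥ φ with hv
  set w := (∑ k, (L k)ᴴ * L k) *ᵥ φ with hw
  have hvw : Complex.I • v + w = μ • φ := by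
    rw [hv, hw, ← smul_mulVec, ← add_mulVec, hEff]
  have hHρ : H * ρ = vecMulVec v (star φ) := by
    rw [hρ, mul_vmv, hv]
  have hρH : ρ * H = vecMulVec φ (star v) := by
    rw [hρ, vmv_mul]
    congr 1
    rw [hv, star_mulVec, hH.eq]
  have hLρL : ∀ k, L k * ρ * (L k)ᴴ = ((Complex.normSq (lam k) : ℂ)) • ρ := by
    intro k
    rw [hρ, mul_vmv, vmv_mul, hL k, ← star_mulVec, hL k, vmv_smul_left, star_smul,
      vmv_smul_right, smul_smul]
    congr 1
    exact Complex.mul_conj (lam k)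
  have hwk : ∀ k, ρ * ((L k)ᴴ * L k) = vecMulVec φ (star (((L k)ᴴ * L k) *ᵥ φ)) := by
    intro k
    rw [hρ, vmv_mul]
    congr 1
    rw [star_mulVec, (Matrix.isHermitian_conjTranspose_mul_self (L k)).eq]
  have hsum : ∑ k, ((L k)ᴴ * L k) *ᵥ φ = w := (sum_mulVec' _ _).symm
  have hSum1 : ∑ k, ((L k)ᴴ * L k * ρ) = vecMulVec w (star φ) := by
    rw [← hsum, vmv_sum_left]
    exact Finset.sum_congr rfl fun k _ => by rw [hρ, mul_vmv]
  have hSum2 : ∑ k, (ρ * ((L k)ᴴ * L k)) = vecMulVec φ (star w) := by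
    rw [← hsum]
    have hstar : star (∑ k, ((L k)ᴴ * L k) *ᵥ φ) = ∑ k, star (((L k)ᴴ * L k) *ᵥ φ) := by
      simp
    rw [hstar, vmv_sum_right]
    exact Finset.sum_congr rfl fun k _ => hwk k
  have hw' : w = μ • φ - Complex.I • v := by
    rw [← hvw]; abel
  have hS : (2 : ℂ) * (∑ k, (Complex.normSq (lam k) : ℂ)) - μ - star μ = 0 := by
    have h2 : μ + (starRingEnd ℂ) μ = 2 * (μ.re : ℂ) := by rw [Complex.add_conj]; push_cast; ring
    have h3 : ((∑ k, Complex.normSq (lam k) : ℝ) : ℂ) = ∑ k, (Complex.normSq (lam k) : ℂ) := by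
      push_cast; ring
    have h4 : (μ.re : ℂ) = ∑ k, (Complex.normSq (lam k) : ℂ) := by rw [← h3, hRe]
    have h5 : star μ = (starRingEnd ℂ) μ := rfl
    rw [h5, ← h4]
    linear_combination -h2
  have hstar2 : star (μ • φ - Complex.I • v) = star μ • star φ + Complex.I • star v := by
    funext i
    simp [Complex.conj_I]
  have hsum' : ∑ k, ((2 : ℂ) • (L k * ρ * (L k)ᴴ) - ((L k)ᴴ * L k * ρ + ρ * ((L k)ᴴ * L k)))
      = ((2:ℂ) * ∑ k, (Complex.normSq (lam k) : ℂ)) • ρ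
        - (vecMulVec w (star φ) + vecMulVec φ (star w)) := by
    rw [Finset.sum_sub_distrib, Finset.sum_add_distrib, hSum1, hSum2]
    congr 1
    rw [Finset.sum_congr rfl (fun k _ => by rw [hLρL k])]
    rw [← Finset.smul_sum, ← Finset.sum_smul, smul_smul]
  unfold lindbladian
  rw [hsum', hHρ, hρH, hw', hstar2, vmv_sub_left, vmv_smul_left, vmv_smul_left,
    vmv_add_right, vmv_smul_right, vmv_smul_right, ← hρ]
  have expand : (-Complex.I) • (vecMulVec v (star φ) - vecMulVec φ (star v))
      + (((2:ℂ) * ∑ k, (Complex.normSq (lam k) : ℂ)) • ρ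
        - ((μ • ρ - Complex.I • vecMulVec v (star φ))
          + (star μ • ρ + Complex.I • vecMulVec φ (star v))))
      = ((2 : ℂ) * (∑ k, (Complex.normSq (lam k) : ℂ)) - μ - star μ) • ρ := by
    module
  rw [expand, hS, zero_smul]
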